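/- For every α ∈ Q one has ∏_{j=0}^{N−1} η(σ^j α) = 1 if and only if Σ_{m=1}^{N−1} (α|σ^m α) ∈ 2ℤ. -/

import Mathlib

theorem stmt_1 (Q : Type*) [AddCommGroup Q] [Module.Free ℤ Q] [Module.Finite ℤ Q]
    (B : Q → Q → ℤ)
    (hB1 : ∀ a a' b : Q, B (a + a') b = B a b + B a' b)
    (hB2 : ∀ a b b' : Q, B a (b + b') = B a b + B a b')
    (hBsymm : ∀ a b : Q, B a b = B b a)
    (hBeven : ∀ a : Q, ∃ n : ℤ, B a a = 2 * n)
    (N : ℕ) (hN : 0 < N)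
    (σ : Q ≃ₗ[ℤ] Q) (hσN : σ ^ N = 1)
    (hisom : ∀ a b : Q, B (σ a) (σ b) = B a b)
    (ε : Q → Q → ℤˣ)
    (hε1 : ∀ a a' b : Q, ε (a + a') b = ε a b * ε a' b)
    (hε2 : ∀ a b b' : Q, ε a (b + b') = ε a b * ε a b')
    (hεB : ∀ a b : Q, ε a b * ε b a = (-1 : ℤˣ) ^ B a b)
    (η : Q → ℤˣ)
    (hη : ∀ a b : Q, η (a + b) * ε (σ a) (σ b) = η a * η b * ε a b)
    (hηfix : ∀ b : Q, σ b = b → η b = 1)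
    (α : Q) :
    (∏ j ∈ Finset.range N, η ((σ ^ j) α)) = 1 ↔
      (2 : ℤ) ∣ ∑ m ∈ Finset.Ico 1 N, B α ((σ ^ m) α) := by
  classical
  have hsq : ∀ u : ℤˣ, u * u = 1 := fun u => Int.units_mul_self u
  have hε0 : ∀ b : Q, ε 0 b = 1 := by
    intro b
    have h := hε1 0 0 b
    rw [add_zero, hsq] at h
    exact h
  have hεneg : ∀ a b : Q, ε (-a) b = ε a b := by
    intro a b
    have h := hε1 a (-a) b
    rw [add_neg_cancel, hε0] at h
    have h2 : ε a b * (1 : ℤˣ) = ε a b * (ε a b * ε (-a) b) := by rw [← h]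
    rw [mul_one, ← mul_assoc, hsq, one_mul] at h2
    exact h2.symm
  have hεsum : ∀ (n : ℕ) (f : ℕ → Q) (b : Q),
      ε (∑ j ∈ Finset.range n, f j) b = ∏ j ∈ Finset.range n, ε (f j) b := by
    intro n f b
    induction n with
    | zero => simp [hε0]
    | succ n ih => rw [Finset.sum_range_succ, Finset.prod_range_succ, hε1, ih]
  set S : ℕ → Q := fun n => ∑ j ∈ Finset.range n, (σ ^ j) α with hSdef
  have hSsucc : ∀ n, S (n + 1) = S n + (σ ^ n) α := by
    intro n; simp [hSdef, Finset.sum_range_succ]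
  have hσS : ∀ n, σ (S n) = S (n + 1) - α := by
    intro n
    have h1 : σ (S n) = ∑ j ∈ Finset.range n, (σ ^ (j + 1)) α := by
      rw [hSdef, map_sum]
      refine Finset.sum_congr rfl fun j _ => ?_
      rw [pow_succ']
      rfl
    have h2 : S (n + 1) = (∑ j ∈ Finset.range n, (σ ^ (j + 1)) α) + (σ ^ 0) α :=
      Finset.sum_range_succ' _ n
    rw [h1, h2]
    simp
  have key : ∀ n, η (S n) * ε (S n) ((σ ^ n) α) =
      (∏ j ∈ Finset.range n, η ((σ ^ j) α)) * ∏ k ∈ Finset.Icc 1 n, ε α ((σ ^ k) α) := by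
    intro n
    induction n with
    | zero =>
      have hS0 : S 0 = 0 := by simp [hSdef]
      simp [hS0, hε0, hηfix 0 (map_zero σ)]
    | succ n ih =>
      have hη' := hη (S n) ((σ ^ n) α)
      have hσpow : σ ((σ ^ n) α) = (σ ^ (n + 1)) α := by rw [pow_succ']; rfl
      rw [hσpow, hσS n, ← hSsucc n] at hη'
      have hsplit : ε (S (n + 1) - α) ((σ ^ (n + 1)) α)
          = ε (S (n + 1)) ((σ ^ (n + 1)) α) * ε α ((σ ^ (n + 1)) α) := by
        rw [sub_eq_add_neg, hε1, hεneg]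
      rw [hsplit] at hη'
      -- hη' : η (S (n+1)) * (ε (S (n+1)) (σ^(n+1) α) * ε α (σ^(n+1) α))
      --      = η (S n) * η (σ^n α) * ε (S n) (σ^n α)
      have goal1 : η (S (n + 1)) * ε (S (n + 1)) ((σ ^ (n + 1)) α)
          = η (S n) * ε (S n) ((σ ^ n) α) * η ((σ ^ n) α) * ε α ((σ ^ (n + 1)) α) := by
        have := congrArg (· * ε α ((σ ^ (n + 1)) α)) hη'
        calc η (S (n + 1)) * ε (S (n + 1)) ((σ ^ (n + 1)) α)
            = η (S (n + 1)) * (ε (S (n + 1)) ((σ ^ (n + 1)) α) * ε α ((σ ^ (n + 1)) α))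
              * ε α ((σ ^ (n + 1)) α) := by
              rw [mul_assoc, mul_assoc, hsq, mul_one]
          _ = η (S n) * η ((σ ^ n) α) * ε (S n) ((σ ^ n) α) * ε α ((σ ^ (n + 1)) α) := this
          _ = η (S n) * ε (S n) ((σ ^ n) α) * η ((σ ^ n) α) * ε α ((σ ^ (n + 1)) α) := by
              rw [mul_right_comm (η (S n)) (η ((σ ^ n) α)) (ε (S n) ((σ ^ n) α))]
      rw [goal1, ih, Finset.prod_range_succ]
      have hIcc : ∏ k ∈ Finset.Icc 1 (n + 1), ε α ((σ ^ k) α)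
          = (∏ k ∈ Finset.Icc 1 n, ε α ((σ ^ k) α)) * ε α ((σ ^ (n + 1)) α) := by
        rw [Finset.prod_Icc_succ_top (by omega)]
      rw [hIcc]
      simp [mul_comm, mul_assoc, mul_left_comm]
  -- σ fixes S N
  have hσNα : (σ ^ N) α = α := by rw [hσN]; rfl
  have hfix : σ (S N) = S N := by
    rw [hσS N, hSsucc N, hσNα]
    abel
  have hηSN : η (S N) = 1 := hηfix _ hfix
  have keyN := key N
  rw [hηSN, one_mul, hσNα] at keyN
  -- keyN : ε (S N) α = P_N * ∏_{Icc 1 N} ε α (σ^k α)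
  have hL : ε (S N) α = ε α α * ∏ j ∈ Finset.Ico 1 N, ε ((σ ^ j) α) α := by
    rw [hSdef]
    simp only
    rw [hεsum N (fun j => (σ ^ j) α) α, Finset.range_eq_Ico,
      Finset.prod_eq_prod_Ico_succ_bot hN]
    simp
  have hR : ∏ k ∈ Finset.Icc 1 N, ε α ((σ ^ k) α)
      = (∏ k ∈ Finset.Ico 1 N, ε α ((σ ^ k) α)) * ε α α := by
    have : Finset.Icc 1 N = Finset.Ico 1 (N + 1) := by
      ext x; simp [Nat.lt_succ_iff]
    rw [this, Finset.prod_Ico_succ_top hN, hσNα]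
  rw [hL, hR] at keyN
  -- cancel ε α α
  have hPN : (∏ j ∈ Finset.range N, η ((σ ^ j) α))
      = (∏ j ∈ Finset.Ico 1 N, ε ((σ ^ j) α) α) * ∏ k ∈ Finset.Ico 1 N, ε α ((σ ^ k) α) := by
    have h1 : ∏ j ∈ Finset.Ico 1 N, ε ((σ ^ j) α) α
        = (∏ j ∈ Finset.range N, η ((σ ^ j) α)) * ∏ k ∈ Finset.Ico 1 N, ε α ((σ ^ k) α) := by
      have := mul_left_cancel (a := ε α α) (by
        rw [keyN]; simp [mul_comm, mul_assoc, mul_left_comm] : ε α α * (∏ j ∈ Finset.Ico 1 N, ε ((σ ^ j) α) α)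
          = ε α α * ((∏ j ∈ Finset.range N, η ((σ ^ j) α))
            * ∏ k ∈ Finset.Ico 1 N, ε α ((σ ^ k) α)))
      exact this
    calc (∏ j ∈ Finset.range N, η ((σ ^ j) α))
        = (∏ j ∈ Finset.range N, η ((σ ^ j) α))
          * ((∏ k ∈ Finset.Ico 1 N, ε α ((σ ^ k) α))
            * ∏ k ∈ Finset.Ico 1 N, ε α ((σ ^ k) α)) := by rw [hsq, mul_one]
      _ = (∏ j ∈ Finset.Ico 1 N, ε ((σ ^ j) α) α) * ∏ k ∈ Finset.Ico 1 N, ε α ((σ ^ k) α) := by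
          rw [h1, ← mul_assoc]
  have hPN2 : (∏ j ∈ Finset.range N, η ((σ ^ j) α))
      = (-1 : ℤˣ) ^ (∑ m ∈ Finset.Ico 1 N, B α ((σ ^ m) α)) := by
    rw [hPN, ← Finset.prod_mul_distrib]
    have hterm : ∀ k ∈ Finset.Ico 1 N,
        ε ((σ ^ k) α) α * ε α ((σ ^ k) α) = (-1 : ℤˣ) ^ B α ((σ ^ k) α) := by
      intro k _
      rw [hεB, hBsymm]
    rw [Finset.prod_congr rfl hterm]
    -- ∏ (-1)^(f k) = (-1)^(∑ f k)
    induction (Finset.Ico 1 N) using Finset.induction with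
    | empty => simp
    | insert _ _ hx ih => rw [Finset.prod_insert hx, Finset.sum_insert hx, zpow_add, ih]
  rw [hPN2]
  rcases Int.even_or_odd (∑ m ∈ Finset.Ico 1 N, B α ((σ ^ m) α)) with he | ho
  · simp [Even.neg_one_zpow he, he.two_dvd]
  · obtain ⟨k, hk⟩ := ho
    rw [hk, zpow_add, zpow_one, Even.neg_one_zpow ⟨k, by ring⟩, one_mul]
    constructor
    · intro h
      have := congrArg Units.val h
      simp at this
    · intro h; omega
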